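/- For all Schwartz functions f₁, f₂ ∈ 𝒮(ℝ^d) and every s ∈ ℝ^d, the iterated integral ∫_{ℝ^d} (𝓕f₁)(t) ( ∫_{ℝ^d} f₂(x + (1/2)ϑt) e^{i(t−s)·x} dx ) dt equals ((𝓕f₁) ⊛_ϑ (𝓕f₂))(s). Equivalently, the Fourier transform of the Moyal product (f₁ ⋆_ϑ f₂)(x) := (2π)^{−d} ∫ (𝓕f₁)(t) f₂(x + (1/2)ϑt) e^{i t·x} dt is (2π)^{−d} (𝓕f₁) ⊛_ϑ (𝓕f₂): the Fourier transform intertwines the Moyal star product with the twisted convolution (relation (4.9) via formula (5.1)). -/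

import Mathlib

/-!
STATEMENT 7 (relation (4.9) via formula (5.1)).
For Schwartz functions `f₁, f₂` and every `s`, the iterated integral
`∫ t, (𝓕f₁)(t) (∫ x, f₂(x + (1/2)ϑt) e^{i(t−s)·x} dx) dt` equals
`((𝓕f₁) ⊛_ϑ (𝓕f₂))(s)`; equivalently, the Fourier transform of the Moyal
product `f₁ ⋆_ϑ f₂` is `(2π)^{−d} (𝓕f₁) ⊛_ϑ (𝓕f₂)`.
-/

open MeasureTheory Matrix

/-- The Fourier transform `(𝓕f)(s) = ∫ f(x) e^{−i x·s} dx`. -/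
noncomputable def fourierT (d : ℕ) (f : (Fin d → ℝ) → ℂ) (s : Fin d → ℝ) : ℂ :=
  ∫ x : Fin d → ℝ, f x * Complex.exp (-Complex.I * ((x ⬝ᵥ s : ℝ) : ℂ))

/-- The twisted convolution
`(g₁ ⊛_ϑ g₂)(s) = ∫ g₁(t) g₂(s−t) e^{(i/2) s·(ϑt)} dt`. -/
noncomputable def twConv (d : ℕ) (ϑ : Matrix (Fin d) (Fin d) ℝ)
    (g₁ g₂ : (Fin d → ℝ) → ℂ) (s : Fin d → ℝ) : ℂ :=
  ∫ t : Fin d → ℝ, g₁ t * g₂ (s - t) *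
    Complex.exp (Complex.I / 2 * ((s ⬝ᵥ ϑ.mulVec t : ℝ) : ℂ))

/-- The Moyal star product
`(f₁ ⋆_ϑ f₂)(x) = (2π)^{−d} ∫ (𝓕f₁)(t) f₂(x + (1/2)ϑt) e^{i t·x} dt`. -/
noncomputable def moyal (d : ℕ) (ϑ : Matrix (Fin d) (Fin d) ℝ)
    (f₁ f₂ : (Fin d → ℝ) → ℂ) (x : Fin d → ℝ) : ℂ :=
  (((2 * Real.pi) ^ d : ℝ) : ℂ)⁻¹ *
    ∫ t : Fin d → ℝ, fourierT d f₁ t * f₂ (x + (1 / 2 : ℝ) • ϑ.mulVec t) *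
      Complex.exp (Complex.I * ((t ⬝ᵥ x : ℝ) : ℂ))

section MoyalAuxSection

open FourierTransform SchwartzMap RealInnerProductSpace

namespace MoyalAux

open FourierTransform SchwartzMap RealInnerProductSpace

variable {d : ℕ}

noncomputable def euclSchwartz (f : SchwartzMap (Fin d → ℝ) ℂ) :
    SchwartzMap (EuclideanSpace ℝ (Fin d)) ℂ :=
  SchwartzMap.compCLMOfContinuousLinearEquiv ℝ (EuclideanSpace.equiv (Fin d) ℝ) f

lemma fourierT_eq (f : SchwartzMap (Fin d → ℝ) ℂ) (s : Fin d → ℝ) :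
    fourierT d ⇑f s =
      𝓕 (⇑(euclSchwartz f))
        ((2 * Real.pi)⁻¹ • ((EuclideanSpace.equiv (Fin d) ℝ).symm s)) := by
  rw [Real.fourier_eq, fourierT,
    ← (EuclideanSpace.volume_preserving_symm_measurableEquiv_toLp (Fin d)).integral_comp
      (MeasurableEquiv.measurableEmbedding _)]
  refine integral_congr_ae (Filter.Eventually.of_forall fun v => ?_)
  have hv : ((MeasurableEquiv.toLp 2 (Fin d → ℝ)).symm) v ⬝ᵥ s
      = ⟪v, ((EuclideanSpace.equiv (Fin d) ℝ).symm s)⟫ := by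
    rw [PiLp.inner_apply]
    simp [dotProduct, MeasurableEquiv.coe_toLp_symm, RCLike.inner_apply,
      mul_comm]
  have h2 : (euclSchwartz f) v = f (((MeasurableEquiv.toLp 2 (Fin d → ℝ)).symm) v) := rfl
  simp only [h2, hv, real_inner_smul_right, Circle.smul_def, Real.fourierChar_apply, smul_eq_mul]
  rw [mul_comm]
  congr 1
  have hπ : (2 * Real.pi) ≠ 0 := by positivity
  push_cast
  congr 1
  have h2π : (2:ℂ) * Real.pi ≠ 0 := by
    simp [Real.pi_ne_zero]
  field_simp


lemma fourierT_continuous (f : SchwartzMap (Fin d → ℝ) ℂ) : Continuous (fourierT d ⇑f) := by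
  have : fourierT d ⇑f = fun s => (SchwartzMap.fourierTransformCLM ℂ (euclSchwartz f))
      ((2 * Real.pi)⁻¹ • ((EuclideanSpace.equiv (Fin d) ℝ).symm s)) := by
    funext s
    rw [fourierT_eq f s]
    rfl
  rw [this]
  exact (SchwartzMap.fourierTransformCLM ℂ (euclSchwartz f)).continuous.comp
    ((continuous_const_smul _).comp (EuclideanSpace.equiv (Fin d) ℝ).symm.continuous)

lemma fourierT_integrable (f : SchwartzMap (Fin d → ℝ) ℂ) :
    Integrable (fourierT d ⇑f) volume := by
  have h0 : Integrable (⇑(SchwartzMap.fourierTransformCLM ℂ (euclSchwartz f))) volume :=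
    SchwartzMap.integrable _
  have h1 : Integrable (fun v : EuclideanSpace ℝ (Fin d) =>
      (SchwartzMap.fourierTransformCLM ℂ (euclSchwartz f)) ((2 * Real.pi)⁻¹ • v)) volume :=
    h0.comp_smul (by positivity)
  have h2 := (((EuclideanSpace.volume_preserving_symm_measurableEquiv_toLp (Fin d)).symm ((MeasurableEquiv.toLp 2 (Fin d → ℝ)).symm)).integrable_comp_emb
    (MeasurableEquiv.measurableEmbedding _)).2 h1
  refine h2.congr (Filter.Eventually.of_forall fun s => ?_)
  rw [fourierT_eq f s]
  rfl


lemma norm_exp_I_mul (r : ℝ) : ‖Complex.exp (Complex.I * (r : ℂ))‖ = 1 := by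
  rw [Complex.norm_exp]
  simp [Complex.mul_re]

lemma norm_exp_neg_I_mul (r : ℝ) : ‖Complex.exp (-Complex.I * (r : ℂ))‖ = 1 := by
  rw [Complex.norm_exp]
  simp [Complex.mul_re]

lemma inner_integral_eq (f₂ : SchwartzMap (Fin d → ℝ) ℂ) (u c : Fin d → ℝ) :
    (∫ x : Fin d → ℝ, f₂ (x + c) * Complex.exp (Complex.I * ((u ⬝ᵥ x : ℝ) : ℂ)))
      = fourierT d ⇑f₂ (-u) * Complex.exp (-Complex.I * ((u ⬝ᵥ c : ℝ) : ℂ)) := by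
  have key : ∀ x : Fin d → ℝ, f₂ (x + c) * Complex.exp (Complex.I * ((u ⬝ᵥ x : ℝ) : ℂ)) =
      (fun y => f₂ y * Complex.exp (Complex.I * ((u ⬝ᵥ y : ℝ) : ℂ))) (x + c) *
        Complex.exp (-Complex.I * ((u ⬝ᵥ c : ℝ) : ℂ)) := by
    intro x
    simp only
    rw [mul_assoc, ← Complex.exp_add]
    congr 2
    have h : (u ⬝ᵥ (x + c) : ℝ) = u ⬝ᵥ x + u ⬝ᵥ c := dotProduct_add u x c
    rw [h]
    push_cast
    ring
  simp_rw [key]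
  rw [integral_mul_const, MeasureTheory.integral_add_right_eq_self
    (fun y => f₂ y * Complex.exp (Complex.I * ((u ⬝ᵥ y : ℝ) : ℂ))) c]
  congr 1
  rw [fourierT]
  refine integral_congr_ae (Filter.Eventually.of_forall fun y => ?_)
  have h : (y ⬝ᵥ (-u) : ℝ) = -(u ⬝ᵥ y) := by
    rw [dotProduct_neg, dotProduct_comm]
  simp only [h]
  congr 2
  push_cast
  ring

end MoyalAux

namespace MoyalAux

noncomputable def Gfun (d : ℕ) (ϑ : Matrix (Fin d) (Fin d) ℝ)
    (f₁ f₂ : (Fin d → ℝ) → ℂ) (s t x : Fin d → ℝ) : ℂ :=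
  fourierT d f₁ t * f₂ (x + (1 / 2 : ℝ) • ϑ.mulVec t) *
    Complex.exp (Complex.I * (((t - s) ⬝ᵥ x : ℝ) : ℂ))

lemma Gfun_apply (d : ℕ) (ϑ : Matrix (Fin d) (Fin d) ℝ)
    (f₁ f₂ : (Fin d → ℝ) → ℂ) (s t x : Fin d → ℝ) :
    Gfun d ϑ f₁ f₂ s t x = fourierT d f₁ t * f₂ (x + (1 / 2 : ℝ) • ϑ.mulVec t) *
      Complex.exp (Complex.I * (((t - s) ⬝ᵥ x : ℝ) : ℂ)) := rfl

lemma Gfun_continuous (d : ℕ) (ϑ : Matrix (Fin d) (Fin d) ℝ)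
    (f₁ f₂ : SchwartzMap (Fin d → ℝ) ℂ) (s : Fin d → ℝ) :
    Continuous (Function.uncurry (Gfun d ϑ ⇑f₁ ⇑f₂ s)) := by
  have hmv : Continuous fun t : Fin d → ℝ => ϑ.mulVec t := by
    have := (Matrix.mulVecLin ϑ).continuous_of_finiteDimensional
    exact this
  have hdot : Continuous fun p : (Fin d → ℝ) × (Fin d → ℝ) => ((p.1 - s) ⬝ᵥ p.2 : ℝ) := by
    simp only [dotProduct]
    refine continuous_finset_sum _ fun i _ => Continuous.mul ?_ ?_
    · exact ((continuous_apply i).comp continuous_fst).sub continuous_const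
    · exact (continuous_apply i).comp continuous_snd
  refine Continuous.mul (Continuous.mul ?_ ?_) ?_
  · exact (MoyalAux.fourierT_continuous f₁).comp continuous_fst
  · exact f₂.continuous.comp (continuous_snd.add
      (((hmv.comp continuous_fst)).const_smul (1 / 2 : ℝ)))
  · exact Complex.continuous_exp.comp
      (continuous_const.mul (Complex.continuous_ofReal.comp hdot))

lemma Gfun_integrable (d : ℕ) (ϑ : Matrix (Fin d) (Fin d) ℝ)
    (f₁ f₂ : SchwartzMap (Fin d → ℝ) ℂ) (s : Fin d → ℝ) :
    Integrable (Function.uncurry (Gfun d ϑ ⇑f₁ ⇑f₂ s)) (volume.prod volume) := by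
  rw [integrable_prod_iff (Gfun_continuous d ϑ f₁ f₂ s).aestronglyMeasurable]
  constructor
  · refine Filter.Eventually.of_forall fun t => ?_
    have h1 : Integrable (fun x : Fin d → ℝ => f₂ (x + (1 / 2 : ℝ) • ϑ.mulVec t)) volume :=
      ((measurePreserving_add_right volume ((1 / 2 : ℝ) • ϑ.mulVec t)).integrable_comp
        f₂.continuous.aestronglyMeasurable).2 f₂.integrable
    have hexpc : Continuous fun x : Fin d → ℝ =>
        Complex.exp (Complex.I * (((t - s) ⬝ᵥ x : ℝ) : ℂ)) := by
      refine Complex.continuous_exp.comp (continuous_const.mul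
        (Complex.continuous_ofReal.comp ?_))
      unfold dotProduct
      exact continuous_finset_sum _ fun i _ => continuous_const.mul (continuous_apply i)
    have h2 : Integrable (fun x : Fin d → ℝ =>
        Complex.exp (Complex.I * (((t - s) ⬝ᵥ x : ℝ) : ℂ)) *
          f₂ (x + (1 / 2 : ℝ) • ϑ.mulVec t)) volume :=
      h1.bdd_mul (c := 1) hexpc.aestronglyMeasurable
        (Filter.Eventually.of_forall fun x => le_of_eq (MoyalAux.norm_exp_I_mul _))
    have h3 := h2.const_mul (fourierT d ⇑f₁ t)
    refine h3.congr (Filter.Eventually.of_forall fun x => ?_)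
    simp only [Function.uncurry_apply_pair, Gfun_apply]
    ring
  · have heq : ∀ t : Fin d → ℝ,
        (∫ x : Fin d → ℝ, ‖Function.uncurry (Gfun d ϑ ⇑f₁ ⇑f₂ s) (t, x)‖)
          = ‖fourierT d ⇑f₁ t‖ * ∫ x : Fin d → ℝ, ‖f₂ x‖ := by
      intro t
      have hpt : ∀ x : Fin d → ℝ, ‖Function.uncurry (Gfun d ϑ ⇑f₁ ⇑f₂ s) (t, x)‖
          = ‖fourierT d ⇑f₁ t‖ * ‖f₂ (x + (1 / 2 : ℝ) • ϑ.mulVec t)‖ := by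
        intro x
        simp only [Function.uncurry_apply_pair, Gfun_apply, norm_mul,
          MoyalAux.norm_exp_I_mul, mul_one]
      simp_rw [hpt]
      rw [integral_const_mul, MeasureTheory.integral_add_right_eq_self
        (fun x => ‖f₂ x‖) ((1 / 2 : ℝ) • ϑ.mulVec t)]
    exact (((MoyalAux.fourierT_integrable f₁).norm.mul_const
      (∫ x : Fin d → ℝ, ‖f₂ x‖))).congr (Filter.Eventually.of_forall fun t => (heq t).symm)

end MoyalAux


end MoyalAuxSection

theorem fourier_intertwines_moyal_and_twisted_convolution
    (d : ℕ) (hd : 1 ≤ d) (ϑ : Matrix (Fin d) (Fin d) ℝ) (hϑ : ϑᵀ = -ϑ)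
    (f₁ f₂ : SchwartzMap (Fin d → ℝ) ℂ) (s : Fin d → ℝ) :
    (∫ t : Fin d → ℝ, fourierT d (⇑f₁) t *
        ∫ x : Fin d → ℝ, f₂ (x + (1 / 2 : ℝ) • ϑ.mulVec t) *
          Complex.exp (Complex.I * (((t - s) ⬝ᵥ x : ℝ) : ℂ))) =
      twConv d ϑ (fourierT d ⇑f₁) (fourierT d ⇑f₂) s ∧
    fourierT d (moyal d ϑ ⇑f₁ ⇑f₂) s =
      (((2 * Real.pi) ^ d : ℝ) : ℂ)⁻¹ *
        twConv d ϑ (fourierT d ⇑f₁) (fourierT d ⇑f₂) s := by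
  have hzero : ∀ t : Fin d → ℝ, (t ⬝ᵥ ϑ.mulVec t : ℝ) = 0 := by
    intro t
    have h1 : (t ⬝ᵥ ϑ.mulVec t : ℝ) = Matrix.vecMul t ϑ ⬝ᵥ t := Matrix.dotProduct_mulVec t ϑ t
    have h2 : Matrix.vecMul t ϑ = -(ϑ.mulVec t) := by
      rw [← Matrix.mulVec_transpose, hϑ, Matrix.neg_mulVec]
    have h3 : (t ⬝ᵥ ϑ.mulVec t : ℝ) = -(t ⬝ᵥ ϑ.mulVec t) :=
      calc (t ⬝ᵥ ϑ.mulVec t : ℝ) = (-(ϑ.mulVec t)) ⬝ᵥ t := by rw [h1, h2]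
        _ = -((ϑ.mulVec t) ⬝ᵥ t) := neg_dotProduct _ _
        _ = -(t ⬝ᵥ ϑ.mulVec t) := by rw [dotProduct_comm]
    linarith
  have hexp : ∀ t : Fin d → ℝ,
      ((t - s) ⬝ᵥ ((1 / 2 : ℝ) • ϑ.mulVec t) : ℝ) = -(1 / 2) * (s ⬝ᵥ ϑ.mulVec t) := by
    intro t
    rw [dotProduct_smul, sub_dotProduct, hzero t]
    simp only [smul_eq_mul]
    ring
  have key1 : ∀ t : Fin d → ℝ,
      fourierT d (⇑f₁) t * ∫ x : Fin d → ℝ, f₂ (x + (1 / 2 : ℝ) • ϑ.mulVec t) *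
          Complex.exp (Complex.I * (((t - s) ⬝ᵥ x : ℝ) : ℂ))
        = fourierT d ⇑f₁ t * fourierT d ⇑f₂ (s - t) *
            Complex.exp (Complex.I / 2 * ((s ⬝ᵥ ϑ.mulVec t : ℝ) : ℂ)) := by
    intro t
    rw [MoyalAux.inner_integral_eq f₂ (t - s) ((1 / 2 : ℝ) • ϑ.mulVec t), neg_sub, ← mul_assoc]
    congr 1
    rw [hexp t]
    congr 1
    push_cast
    ring
  have conj1 : (∫ t : Fin d → ℝ, fourierT d (⇑f₁) t *
        ∫ x : Fin d → ℝ, f₂ (x + (1 / 2 : ℝ) • ϑ.mulVec t) *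
          Complex.exp (Complex.I * (((t - s) ⬝ᵥ x : ℝ) : ℂ))) =
      twConv d ϑ (fourierT d ⇑f₁) (fourierT d ⇑f₂) s := by
    rw [twConv]
    exact integral_congr_ae (Filter.Eventually.of_forall key1)
  refine ⟨conj1, ?_⟩
  have hswap : (∫ t : Fin d → ℝ, ∫ x : Fin d → ℝ, MoyalAux.Gfun d ϑ ⇑f₁ ⇑f₂ s t x)
      = ∫ x : Fin d → ℝ, ∫ t : Fin d → ℝ, MoyalAux.Gfun d ϑ ⇑f₁ ⇑f₂ s t x :=
    MeasureTheory.integral_integral_swap (MoyalAux.Gfun_integrable d ϑ f₁ f₂ s)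
  have hstep : fourierT d (moyal d ϑ ⇑f₁ ⇑f₂) s
      = (((2 * Real.pi) ^ d : ℝ) : ℂ)⁻¹ * ∫ x : Fin d → ℝ, (∫ t : Fin d → ℝ,
          fourierT d ⇑f₁ t * f₂ (x + (1 / 2 : ℝ) • ϑ.mulVec t) *
            Complex.exp (Complex.I * ((t ⬝ᵥ x : ℝ) : ℂ))) *
          Complex.exp (-Complex.I * ((x ⬝ᵥ s : ℝ) : ℂ)) := by
    rw [fourierT, ← integral_const_mul]
    refine integral_congr_ae (Filter.Eventually.of_forall fun x => ?_)
    simp only [moyal]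
    ring
  have h3 : ∀ x : Fin d → ℝ, (∫ t : Fin d → ℝ,
        fourierT d ⇑f₁ t * f₂ (x + (1 / 2 : ℝ) • ϑ.mulVec t) *
          Complex.exp (Complex.I * ((t ⬝ᵥ x : ℝ) : ℂ))) *
        Complex.exp (-Complex.I * ((x ⬝ᵥ s : ℝ) : ℂ))
      = ∫ t : Fin d → ℝ, MoyalAux.Gfun d ϑ ⇑f₁ ⇑f₂ s t x := by
    intro x
    rw [← integral_mul_const]
    refine integral_congr_ae (Filter.Eventually.of_forall fun t => ?_)
    simp only [MoyalAux.Gfun_apply]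
    rw [mul_assoc, mul_assoc, ← Complex.exp_add, ← mul_assoc]
    congr 2
    have hd2 : ((t - s) ⬝ᵥ x : ℝ) = t ⬝ᵥ x - s ⬝ᵥ x := sub_dotProduct t s x
    have hd3 : (x ⬝ᵥ s : ℝ) = s ⬝ᵥ x := dotProduct_comm x s
    rw [hd2, hd3]
    push_cast
    ring
  have h4 : ∀ t : Fin d → ℝ, (∫ x : Fin d → ℝ, MoyalAux.Gfun d ϑ ⇑f₁ ⇑f₂ s t x)
      = fourierT d (⇑f₁) t * ∫ x : Fin d → ℝ, f₂ (x + (1 / 2 : ℝ) • ϑ.mulVec t) *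
          Complex.exp (Complex.I * (((t - s) ⬝ᵥ x : ℝ) : ℂ)) := by
    intro t
    rw [← integral_const_mul]
    refine integral_congr_ae (Filter.Eventually.of_forall fun x => ?_)
    simp only [MoyalAux.Gfun_apply]
    ring
  rw [hstep]
  congr 1
  calc (∫ x : Fin d → ℝ, (∫ t : Fin d → ℝ,
        fourierT d ⇑f₁ t * f₂ (x + (1 / 2 : ℝ) • ϑ.mulVec t) *
          Complex.exp (Complex.I * ((t ⬝ᵥ x : ℝ) : ℂ))) *
        Complex.exp (-Complex.I * ((x ⬝ᵥ s : ℝ) : ℂ)))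
      = ∫ x : Fin d → ℝ, ∫ t : Fin d → ℝ, MoyalAux.Gfun d ϑ ⇑f₁ ⇑f₂ s t x :=
        integral_congr_ae (Filter.Eventually.of_forall h3)
    _ = ∫ t : Fin d → ℝ, ∫ x : Fin d → ℝ, MoyalAux.Gfun d ϑ ⇑f₁ ⇑f₂ s t x := hswap.symm
    _ = ∫ t : Fin d → ℝ, fourierT d (⇑f₁) t * ∫ x : Fin d → ℝ,
          f₂ (x + (1 / 2 : ℝ) • ϑ.mulVec t) *
            Complex.exp (Complex.I * (((t - s) ⬝ᵥ x : ℝ) : ℂ)) :=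
        integral_congr_ae (Filter.Eventually.of_forall h4)
    _ = twConv d ϑ (fourierT d ⇑f₁) (fourierT d ⇑f₂) s := conj1
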